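/- Upper bound on the non-excess probability (non-asymptotic core of Theorem 4.3): let n = m·α with m ≥ 2 and α ≥ 1 naturals, and let d be a natural number with α ≤ d and d + 1 ≤ n. Then |{f : Fin n → Fin m ; ∀ k ∈ Fin m, |f⁻¹(k)| ≤ d}| ≤ m^n · exp( − m · (1 − 1/m)^n · (α/(d+1))^{d+1} ); that is, the probability that a uniformly random function from Fin n to Fin m has all fibers of size at most d is at most exp(−m·(1−1/m)^n·(α/(d+1))^{d+1}). -/

import Mathlib

open Finset

namespace NonExcess

variable {n m d : ℕ}

def Nc (n m d : ℕ) (S : Finset (Fin m)) : ℕ :=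
  (univ.filter fun f : Fin n → Fin m =>
    ∀ j ∈ S, (univ.filter fun x => f x = j).card ≤ d).card

/-- number of `f : Fin n → Fin m` with fiber over `k` exactly `T` and fibers over `S` small -/

def Vc (n m d : ℕ) (k : Fin m) (S : Finset (Fin m)) (T : Finset (Fin n)) : ℕ :=
  (univ.filter fun f : Fin n → Fin m =>
    (∀ x, f x = k ↔ x ∈ T) ∧ ∀ j ∈ S, (univ.filter fun x => f x = j).card ≤ d).card

lemma card_fiber_eq (k : Fin m) (T : Finset (Fin n)) :
    (univ.filter fun f : Fin n → Fin m => ∀ x, f x = k ↔ x ∈ T).card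
      = (m - 1) ^ (n - T.card) := by
  have h : (univ.filter fun f : Fin n → Fin m => ∀ x, f x = k ↔ x ∈ T)
      = Fintype.piFinset (fun x : Fin n => if x ∈ T then {k} else univ.erase k) := by
    ext f
    simp only [mem_filter, mem_univ, true_and, Fintype.mem_piFinset]
    apply forall_congr'
    intro x
    by_cases hx : x ∈ T <;> simp [hx]
  rw [h, Fintype.card_piFinset]
  have : ∀ x : Fin n, (if x ∈ T then ({k} : Finset (Fin m)) else univ.erase k).card
      = if x ∈ T then 1 else m - 1 := by
    intro x; by_cases hx : x ∈ T <;> simp [hx, card_erase_of_mem, card_univ]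
  simp only [this]
  rw [Finset.prod_ite, Finset.prod_const_one, Finset.prod_const, one_mul]
  congr 1
  have h2 := Finset.card_filter_add_card_filter_not (s := (univ : Finset (Fin n)))
    (p := fun x => x ∈ T)
  have h3 : (univ : Finset (Fin n)).filter (fun x => x ∈ T) = T := by
    simp [Finset.filter_mem_eq_inter]
  rw [h3, card_univ, Fintype.card_fin] at h2
  omega

lemma Nc_insert_eq_sum (k : Fin m) (S : Finset (Fin m)) :
    Nc n m d (insert k S) =
      ∑ T ∈ ((univ : Finset (Fin n)).powerset.filter fun T => T.card ≤ d),
        Vc n m d k S T := by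
  rw [Nc, Finset.card_eq_sum_card_fiberwise
    (f := fun f : Fin n → Fin m => univ.filter fun x => f x = k)
    (t := (univ : Finset (Fin n)).powerset.filter fun T => T.card ≤ d) ?H]
  case H =>
    intro f hf
    simp only [mem_filter, mem_univ, true_and, Finset.mem_coe] at hf ⊢
    exact ⟨mem_powerset.2 (subset_univ _), hf k (mem_insert_self _ _)⟩
  apply Finset.sum_congr rfl
  intro T hT
  simp only [mem_filter, mem_powerset] at hT
  rw [Vc, Finset.filter_filter]
  congr 1
  ext f
  simp only [mem_filter, mem_univ, true_and]
  constructor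
  · rintro ⟨hcond, hfib⟩
    have hiff : ∀ x, f x = k ↔ x ∈ T := by
      intro x; rw [← hfib]; simp
    exact ⟨hiff, fun j hj => hcond j (mem_insert_of_mem hj)⟩
  · rintro ⟨hiff, hcond⟩
    have hfib : univ.filter (fun x => f x = k) = T := by
      ext x; simp [hiff x]
    refine ⟨?_, hfib⟩
    intro j hj
    rcases mem_insert.1 hj with h | h
    · subst h; rw [hfib]; exact hT.2
    · exact hcond j h

lemma Nc_eq_sum (k : Fin m) (S : Finset (Fin m)) :
    Nc n m d S = ∑ T ∈ (univ : Finset (Fin n)).powerset, Vc n m d k S T := by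
  rw [Nc, Finset.card_eq_sum_card_fiberwise
    (f := fun f : Fin n → Fin m => univ.filter fun x => f x = k)
    (t := (univ : Finset (Fin n)).powerset) ?H]
  case H => intro f _; exact mem_powerset.2 (subset_univ _)
  apply Finset.sum_congr rfl
  intro T _
  rw [Vc, Finset.filter_filter]
  congr 1
  ext f
  simp only [mem_filter, mem_univ, true_and]
  constructor
  · rintro ⟨hcond, hfib⟩
    have hiff : ∀ x, f x = k ↔ x ∈ T := by
      intro x; rw [← hfib]; simp
    exact ⟨hiff, hcond⟩
  · rintro ⟨hiff, hcond⟩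
    have hfib : univ.filter (fun x => f x = k) = T := by
      ext x; simp [hiff x]
    exact ⟨hcond, hfib⟩

lemma Vc_empty (k : Fin m) (T : Finset (Fin n)) :
    Vc n m d k ∅ T = (m - 1) ^ (n - T.card) := by
  rw [Vc, ← card_fiber_eq k T]
  congr 1
  ext f
  simp

lemma Nc_empty : Nc n m d (∅ : Finset (Fin m)) = m ^ n := by
  rw [Nc]
  have : (univ.filter fun f : Fin n → Fin m =>
      ∀ j ∈ (∅ : Finset (Fin m)), (univ.filter fun x => f x = j).card ≤ d) = univ := by
    ext f; simp
  rw [this, card_univ]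
  simp

lemma Nc_singleton_eq_sum (k : Fin m) :
    Nc n m d {k} =
      ∑ T ∈ ((univ : Finset (Fin n)).powerset.filter fun T => T.card ≤ d),
        (m - 1) ^ (n - T.card) := by
  have h : ({k} : Finset (Fin m)) = insert k ∅ := rfl
  rw [h, Nc_insert_eq_sum]
  exact Finset.sum_congr rfl fun T _ => Vc_empty k T

lemma total_eq_sum (k : Fin m) :
    m ^ n = ∑ T ∈ (univ : Finset (Fin n)).powerset, (m - 1) ^ (n - T.card) := by
  rw [← @Nc_empty n m 0, Nc_eq_sum k]
  exact Finset.sum_congr rfl fun T _ => Vc_empty k T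

lemma card_filter_comp_equiv (σ : Equiv.Perm (Fin n)) (f : Fin n → Fin m) (j : Fin m) :
    (univ.filter fun z => f (σ z) = j).card = (univ.filter fun z => f z = j).card := by
  apply Finset.card_bij (fun z _ => σ z)
  · intro a ha; simp only [mem_filter, mem_univ, true_and] at ha ⊢; exact ha
  · intro a _ b _ hab; exact σ.injective hab
  · intro b hb
    refine ⟨σ.symm b, ?_, by simp⟩
    simp only [mem_filter, mem_univ, true_and] at hb ⊢
    simpa using hb

lemma Vc_congr_card (k : Fin m) (S : Finset (Fin m)) {T₁ T₂ : Finset (Fin n)}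
    (h : T₁.card = T₂.card) : Vc n m d k S T₁ = Vc n m d k S T₂ := by
  classical
  have hcompl : (T₂ᶜ : Finset (Fin n)).card = (T₁ᶜ : Finset (Fin n)).card := by
    rw [card_compl, card_compl, h]
  let e₁ : ↥T₂ ≃ ↥T₁ := Finset.equivOfCardEq h.symm
  let e₂ : ↥(T₂ᶜ : Finset (Fin n)) ≃ ↥(T₁ᶜ : Finset (Fin n)) := Finset.equivOfCardEq hcompl
  let e₂' : {x : Fin n // ¬ x ∈ T₂} ≃ {x : Fin n // ¬ x ∈ T₁} :=
    ((Equiv.subtypeEquivRight (fun x => (Finset.mem_compl (s := T₂) (a := x)).symm)).trans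
      e₂).trans (Equiv.subtypeEquivRight (fun x => Finset.mem_compl (s := T₁) (a := x)))
  let σ : Equiv.Perm (Fin n) :=
    ((Equiv.sumCompl (· ∈ T₂)).symm.trans ((e₁.sumCongr e₂').trans
      (Equiv.sumCompl (· ∈ T₁))))
  have hσ : ∀ x, σ x ∈ T₁ ↔ x ∈ T₂ := by
    intro x
    by_cases hx : x ∈ T₂
    · have h1 : (Equiv.sumCompl (· ∈ T₂)).symm x = Sum.inl ⟨x, hx⟩ :=
        Equiv.sumCompl_symm_apply_of_pos hx
      have : σ x = ↑(e₁ ⟨x, hx⟩) := by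
        simp only [σ, Equiv.trans_apply, h1, Equiv.sumCongr_apply, Sum.map_inl,
          Equiv.sumCompl_apply_inl]
      rw [this]
      exact iff_of_true (e₁ ⟨x, hx⟩).2 hx
    · have h1 : (Equiv.sumCompl (· ∈ T₂)).symm x = Sum.inr ⟨x, hx⟩ :=
        Equiv.sumCompl_symm_apply_of_neg hx
      have : σ x = ↑(e₂' ⟨x, hx⟩) := by
        simp only [σ, Equiv.trans_apply, h1, Equiv.sumCongr_apply, Sum.map_inr,
          Equiv.sumCompl_apply_inr]
      rw [this]
      simp only [hx, iff_false]
      exact (e₂' ⟨x, hx⟩).2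
  have hσ' : ∀ y, σ.symm y ∈ T₂ ↔ y ∈ T₁ := by
    intro y
    rw [← hσ (σ.symm y), Equiv.apply_symm_apply]
  rw [Vc, Vc]
  apply Finset.card_bij (fun f _ => f ∘ σ)
  · rintro f hf
    simp only [mem_filter, mem_univ, true_and] at hf ⊢
    obtain ⟨hiff, hfib⟩ := hf
    constructor
    · intro y
      rw [Function.comp_apply, hiff (σ y), hσ y]
    · intro j hj
      rw [show (univ.filter fun z => (f ∘ σ) z = j) = univ.filter fun z => f (σ z) = j from rfl]
      rw [card_filter_comp_equiv σ f j]
      exact hfib j hj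
  · intro f hf g hg hfg
    funext y
    have := congrFun hfg (σ.symm y)
    simpa using this
  · intro g hg
    simp only [mem_filter, mem_univ, true_and] at hg
    obtain ⟨hiff, hfib⟩ := hg
    refine ⟨g ∘ σ.symm, ?_, ?_⟩
    · simp only [mem_filter, mem_univ, true_and]
      constructor
      · intro y
        rw [Function.comp_apply, hiff (σ.symm y), hσ' y]
      · intro j hj
        rw [show (univ.filter fun z => (g ∘ σ.symm) z = j)
            = univ.filter fun z => g (σ.symm z) = j from rfl]
        rw [card_filter_comp_equiv σ.symm g j]
        exact hfib j hj
    · funext z; simp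

lemma Vc_update_le (k : Fin m) {S : Finset (Fin m)} (hk : k ∉ S)
    {T : Finset (Fin n)} {x : Fin n} (hx : x ∉ T) :
    Vc n m d k S T ≤ (m - 1) * Vc n m d k S (insert x T) := by
  classical
  rw [Vc, Vc, mul_comm]
  have := Finset.card_le_card_of_injOn
    (f := fun f : Fin n → Fin m => (Function.update f x k, f x))
    (s := univ.filter fun f : Fin n → Fin m =>
      (∀ y, f y = k ↔ y ∈ T) ∧ ∀ j ∈ S, (univ.filter fun z => f z = j).card ≤ d)
    (t := (univ.filter fun f : Fin n → Fin m =>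
      (∀ y, f y = k ↔ y ∈ insert x T) ∧ ∀ j ∈ S, (univ.filter fun z => f z = j).card ≤ d)
        ×ˢ (univ.erase k)) ?maps ?inj
  · calc _ ≤ _ := this
    _ = _ := by rw [Finset.card_product, card_erase_of_mem (mem_univ k), card_univ]; simp
  case maps =>
    intro f hf
    simp only [mem_filter, mem_univ, true_and, Finset.mem_product, mem_erase, Finset.mem_coe] at hf ⊢
    obtain ⟨hiff, hfib⟩ := hf
    refine ⟨⟨?_, ?_⟩, ?_, trivial⟩
    · intro y
      by_cases hy : y = x
      · subst hy; simp [Function.update_self]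
      · rw [Function.update_of_ne hy]
        rw [hiff y]
        simp [hy]
    · intro j hj
      have hjk : j ≠ k := by rintro rfl; exact hk hj
      have hsub : (univ.filter fun z => Function.update f x k z = j)
          ⊆ univ.filter fun z => f z = j := by
        intro z hz
        simp only [mem_filter, mem_univ, true_and] at hz ⊢
        by_cases hzx : z = x
        · subst hzx; rw [Function.update_self] at hz; exact absurd hz hjk.symm
        · rwa [Function.update_of_ne hzx] at hz
      exact le_trans (Finset.card_le_card hsub) (hfib j hj)
    · intro hfx
      exact hx ((hiff x).1 hfx)
  case inj =>
    intro f hf g hg hfg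
    simp only [Prod.mk.injEq] at hfg
    obtain ⟨h1, h2⟩ := hfg
    funext y
    by_cases hy : y = x
    · subst hy; exact h2
    · have := congrFun h1 y
      rwa [Function.update_of_ne hy, Function.update_of_ne hy] at this

lemma Vc_le_union (k : Fin m) {S : Finset (Fin m)} (hk : k ∉ S)
    (u : Finset (Fin n)) :
    ∀ T : Finset (Fin n), Disjoint u T →
      Vc n m d k S T ≤ (m - 1) ^ u.card * Vc n m d k S (T ∪ u) := by
  classical
  induction u using Finset.induction_on with
  | empty => intro T _; simp
  | @insert x u hxu IH =>
    intro T hdisj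
    have hxT : x ∉ T := by
      have := Finset.disjoint_left.1 hdisj (mem_insert_self x u)
      exact this
    have hdisj' : Disjoint u T := by
      exact Finset.disjoint_of_subset_left (subset_insert x u) hdisj
    have h1 : Vc n m d k S T ≤ (m - 1) ^ u.card * Vc n m d k S (T ∪ u) := IH T hdisj'
    have hxTu : x ∉ T ∪ u := by simp [hxT, hxu]
    have h2 : Vc n m d k S (T ∪ u) ≤ (m - 1) * Vc n m d k S (insert x (T ∪ u)) :=
      Vc_update_le k hk hxTu
    have h3 : insert x (T ∪ u) = T ∪ insert x u := by
      rw [Finset.union_insert]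
    rw [card_insert_of_notMem hxu, pow_succ]
    calc Vc n m d k S T ≤ (m - 1) ^ u.card * ((m - 1) * Vc n m d k S (insert x (T ∪ u))) :=
          le_trans h1 (Nat.mul_le_mul_left _ h2)
      _ = (m - 1) ^ u.card * (m - 1) * Vc n m d k S (T ∪ insert x u) := by rw [h3]; ring

lemma Vc_mono_card (k : Fin m) {S : Finset (Fin m)} (hk : k ∉ S)
    {T T' : Finset (Fin n)} (h : T.card ≤ T'.card) :
    Vc n m d k S T ≤ (m - 1) ^ (T'.card - T.card) * Vc n m d k S T' := by
  classical
  have hT'n : T'.card ≤ n := by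
    have := Finset.card_le_univ T'
    simpa using this
  obtain ⟨u, hTu, -, hucard⟩ := Finset.exists_subsuperset_card_eq (Finset.subset_univ T) h
    (by simpa using hT'n)
  have hdisj : Disjoint (u \ T) T := Finset.sdiff_disjoint
  have h1 := Vc_le_union (n := n) (m := m) (d := d) k hk (u \ T) T hdisj
  rw [Finset.union_sdiff_of_subset hTu, Finset.card_sdiff_of_subset hTu, hucard] at h1
  calc Vc n m d k S T ≤ (m - 1) ^ (T'.card - T.card) * Vc n m d k S u := h1
    _ = (m - 1) ^ (T'.card - T.card) * Vc n m d k S T' := by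
        rw [Vc_congr_card k S (hucard : u.card = T'.card)]

/-- abstract pairing inequality -/

lemma pair_sum {ι : Type*} (s : Finset ι) (a b c e : ι → ℕ)
    (h : ∀ i ∈ s, ∀ j ∈ s, a i * b j + a j * b i ≤ c i * e j + c j * e i) :
    (∑ i ∈ s, a i) * (∑ i ∈ s, b i) ≤ (∑ i ∈ s, c i) * (∑ i ∈ s, e i) := by
  have key : ∑ i ∈ s, ∑ j ∈ s, (a i * b j + a j * b i)
      ≤ ∑ i ∈ s, ∑ j ∈ s, (c i * e j + c j * e i) :=
    Finset.sum_le_sum fun i hi => Finset.sum_le_sum fun j hj => h i hi j hj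
  have expand : ∀ p q : ι → ℕ, ∑ i ∈ s, ∑ j ∈ s, (p i * q j + p j * q i)
      = 2 * ((∑ i ∈ s, p i) * (∑ i ∈ s, q i)) := by
    intro p q
    rw [Finset.sum_mul_sum]
    simp only [Finset.sum_add_distrib]
    rw [Finset.sum_comm (f := fun i j => p j * q i)]
    ring
  rw [expand, expand] at key
  omega

lemma cross_bound (k : Fin m) {S : Finset (Fin m)} (hk : k ∉ S)
    {T T' : Finset (Fin n)} (hT' : T'.card ≤ n) (h : T.card ≤ T'.card) :
    Vc n m d k S T * (m - 1) ^ (n - T'.card)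
      ≤ (m - 1) ^ (n - T.card) * Vc n m d k S T' := by
  calc Vc n m d k S T * (m - 1) ^ (n - T'.card)
      ≤ ((m - 1) ^ (T'.card - T.card) * Vc n m d k S T') * (m - 1) ^ (n - T'.card) :=
        Nat.mul_le_mul_right _ (Vc_mono_card k hk h)
    _ = (m - 1) ^ (T'.card - T.card) * (m - 1) ^ (n - T'.card) * Vc n m d k S T' := by ring
    _ = (m - 1) ^ (n - T.card) * Vc n m d k S T' := by
        have he : T'.card - T.card + (n - T'.card) = n - T.card := by omega
        rw [← pow_add, he]

lemma na_step (k : Fin m) {S : Finset (Fin m)} (hk : k ∉ S) :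
    Nc n m d (insert k S) * m ^ n ≤ Nc n m d {k} * Nc n m d S := by
  classical
  have ha : Nc n m d (insert k S)
      = ∑ T ∈ (univ : Finset (Fin n)).powerset,
          (if T.card ≤ d then Vc n m d k S T else 0) := by
    rw [Nc_insert_eq_sum k S, Finset.sum_filter]
  have hc : Nc n m d {k}
      = ∑ T ∈ (univ : Finset (Fin n)).powerset,
          (if T.card ≤ d then (m - 1) ^ (n - T.card) else 0) := by
    rw [Nc_singleton_eq_sum k, Finset.sum_filter]
  rw [ha, hc, Nc_eq_sum k S, total_eq_sum (n := n) k]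
  apply pair_sum
  intro T hT T' hT'
  have hTn : T.card ≤ n := by
    simpa using Finset.card_le_univ T
  have hT'n : T'.card ≤ n := by
    simpa using Finset.card_le_univ T'
  by_cases h1 : T.card ≤ d <;> by_cases h2 : T'.card ≤ d <;> simp [h1, h2]
  · apply Nat.le_of_eq; ring
  · have : T.card ≤ T'.card := by omega
    exact cross_bound k hk hT'n this
  · have : T'.card ≤ T.card := by omega
    exact cross_bound k hk hTn this

lemma na_main (S : Finset (Fin m)) :
    Nc n m d S * (m ^ n) ^ S.card ≤ m ^ n * ∏ j ∈ S, Nc n m d {j} := by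
  classical
  induction S using Finset.induction_on with
  | empty => simp [Nc_empty]
  | @insert k S hk IH =>
    rw [card_insert_of_notMem hk, prod_insert hk, pow_succ]
    calc Nc n m d (insert k S) * ((m ^ n) ^ S.card * m ^ n)
        = (Nc n m d (insert k S) * m ^ n) * (m ^ n) ^ S.card := by ring
      _ ≤ (Nc n m d {k} * Nc n m d S) * (m ^ n) ^ S.card :=
          Nat.mul_le_mul_right _ (na_step k hk)
      _ = Nc n m d {k} * (Nc n m d S * (m ^ n) ^ S.card) := by ring
      _ ≤ Nc n m d {k} * (m ^ n * ∏ j ∈ S, Nc n m d {j}) := Nat.mul_le_mul_left _ IH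
      _ = m ^ n * (Nc n m d {k} * ∏ j ∈ S, Nc n m d {j}) := by ring

lemma card_exact_fiber (j : Fin m) :
    (univ.filter fun f : Fin n → Fin m =>
        (univ.filter fun x => f x = j).card = d + 1).card
      = n.choose (d + 1) * (m - 1) ^ (n - (d + 1)) := by
  classical
  rw [Finset.card_eq_sum_card_fiberwise
    (f := fun f : Fin n → Fin m => univ.filter fun x => f x = j)
    (t := (univ : Finset (Fin n)).powersetCard (d + 1)) ?H]
  case H =>
    intro f hf
    simp only [mem_filter, mem_univ, true_and, Finset.mem_coe] at hf ⊢
    rw [Finset.mem_powersetCard]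
    exact ⟨subset_univ _, hf⟩
  have hconst : ∀ T ∈ (univ : Finset (Fin n)).powersetCard (d + 1),
      ((univ.filter fun f : Fin n → Fin m =>
          (univ.filter fun x => f x = j).card = d + 1).filter
        fun f => (univ.filter fun x => f x = j) = T).card
      = (m - 1) ^ (n - (d + 1)) := by
    intro T hT
    rw [Finset.mem_powersetCard] at hT
    rw [Finset.filter_filter]
    have heq : (univ.filter fun f : Fin n → Fin m =>
        ((univ.filter fun x => f x = j).card = d + 1) ∧ (univ.filter fun x => f x = j) = T)
        = univ.filter fun f : Fin n → Fin m => ∀ x, f x = j ↔ x ∈ T := by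
      ext f
      simp only [mem_filter, mem_univ, true_and]
      constructor
      · rintro ⟨-, hfib⟩ x
        rw [← hfib]; simp
      · intro hiff
        have hfib : univ.filter (fun x => f x = j) = T := by
          ext x; simp [hiff x]
        exact ⟨by rw [hfib, hT.2], hfib⟩
    rw [heq, card_fiber_eq j T, hT.2]
  rw [Finset.sum_congr rfl hconst, Finset.sum_const, Finset.card_powersetCard, card_univ,
    Fintype.card_fin, smul_eq_mul]

lemma Nc_singleton_add_le (j : Fin m) :
    Nc n m d {j} + n.choose (d + 1) * (m - 1) ^ (n - (d + 1)) ≤ m ^ n := by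
  classical
  rw [Nc, ← card_exact_fiber j]
  have hdisj : Disjoint
      (univ.filter fun f : Fin n → Fin m =>
        ∀ i ∈ ({j} : Finset (Fin m)), (univ.filter fun x => f x = i).card ≤ d)
      (univ.filter fun f : Fin n → Fin m =>
        (univ.filter fun x => f x = j).card = d + 1) := by
    rw [Finset.disjoint_left]
    intro f hf1 hf2
    simp only [mem_filter, mem_univ, true_and, mem_singleton, forall_eq] at hf1 hf2
    omega
  rw [← Finset.card_union_of_disjoint hdisj]
  calc _ ≤ (univ : Finset (Fin n → Fin m)).card := Finset.card_le_card (subset_univ _)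
    _ = m ^ n := by rw [card_univ]; simp

lemma pow_le_choose_mul : ∀ k n : ℕ, k ≤ n → n ^ k ≤ n.choose k * k ^ k := by
  intro k
  induction k with
  | zero => intro n _; simp
  | succ k IH =>
    intro n hn
    obtain ⟨s, rfl⟩ : ∃ s, n = s + 1 := ⟨n - 1, by omega⟩
    have hks : k ≤ s := by omega
    have hid : (s + 1) * s.choose k = (s + 1).choose (k + 1) * (k + 1) := by
      simpa using Nat.add_one_mul_choose_eq s k
    have hIH := IH s hks
    have hkk : 0 < k ^ k := by
      rcases Nat.eq_zero_or_pos k with h | h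
      · subst h; simp
      · exact pow_pos h _
    apply Nat.le_of_mul_le_mul_right ?_ hkk
    have hmul : (s + 1) * k ≤ s * (k + 1) := by
      calc (s + 1) * k = s * k + k := by ring
        _ ≤ s * k + s := Nat.add_le_add_left hks _
        _ = s * (k + 1) := by ring
    calc (s + 1) ^ (k + 1) * k ^ k
        = (s + 1) * ((s + 1) * k) ^ k := by rw [mul_pow]; ring
      _ ≤ (s + 1) * (s * (k + 1)) ^ k :=
          Nat.mul_le_mul_left _ (Nat.pow_le_pow_left hmul k)
      _ = (s + 1) * (s ^ k * (k + 1) ^ k) := by rw [mul_pow]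
      _ ≤ (s + 1) * (s.choose k * k ^ k * (k + 1) ^ k) :=
          Nat.mul_le_mul_left _ (Nat.mul_le_mul_right _ hIH)
      _ = ((s + 1) * s.choose k) * (k ^ k * (k + 1) ^ k) := by ring
      _ = ((s + 1).choose (k + 1) * (k + 1)) * (k ^ k * (k + 1) ^ k) := by rw [hid]
      _ = (s + 1).choose (k + 1) * (k + 1) ^ (k + 1) * k ^ k := by ring

theorem helper (n m α d : ℕ) (hm : 2 ≤ m) (hα : 1 ≤ α)
    (hαd : α ≤ d) (hd : d + 1 ≤ n) (hnα : n = m * α) :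
    ((Finset.univ.filter fun f : Fin n → Fin m =>
        ∀ k : Fin m, (Finset.univ.filter fun x => f x = k).card ≤ d).card : ℝ)
      ≤ (m : ℝ) ^ n *
        Real.exp (-(m : ℝ) * (1 - 1 / m) ^ n * ((α : ℝ) / (d + 1)) ^ (d + 1)) := by
  classical
  have hLHS : (Finset.univ.filter fun f : Fin n → Fin m =>
      ∀ k : Fin m, (Finset.univ.filter fun x => f x = k).card ≤ d)
      = (univ.filter fun f : Fin n → Fin m =>
        ∀ j ∈ (univ : Finset (Fin m)), (univ.filter fun x => f x = j).card ≤ d) :=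
    Finset.filter_congr (fun f _ => by simp)
  rw [hLHS]
  show (Nc n m d (univ : Finset (Fin m)) : ℝ) ≤ _
  obtain ⟨N, hN⟩ : ∃ N, N = m ^ n := ⟨_, rfl⟩
  obtain ⟨c₀, hc₀⟩ : ∃ c, c = n.choose (d + 1) * (m - 1) ^ (n - (d + 1)) := ⟨_, rfl⟩
  have j₀ : Fin m := ⟨0, by omega⟩
  have hsing : ∀ j : Fin m, Nc n m d {j} + c₀ ≤ N := by
    intro j; rw [hc₀, hN]; exact Nc_singleton_add_le j
  have hc₀N : c₀ ≤ N := by have := hsing j₀; omega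
  have hNc_le : ∀ j : Fin m, Nc n m d {j} ≤ N - c₀ := by
    intro j; have := hsing j; omega
  have hNposn : 0 < N := by rw [hN]; positivity
  have hNpos : (0:ℝ) < (N : ℝ) := by exact_mod_cast hNposn
  have hm1cast : ((m - 1 : ℕ) : ℝ) = (m : ℝ) - 1 := by
    rw [Nat.cast_sub (by omega : 1 ≤ m)]; simp
  -- main product bound, real version
  have hmain : (Nc n m d (univ : Finset (Fin m)) : ℝ) * (N:ℝ) ^ m
      ≤ (N:ℝ) * ((N:ℝ) - (c₀:ℝ)) ^ m := by
    have h1 := na_main (n := n) (m := m) (d := d) (univ : Finset (Fin m))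
    rw [Finset.card_univ, Fintype.card_fin, ← hN] at h1
    have h1' : (Nc n m d (univ : Finset (Fin m)) : ℝ) * (N:ℝ) ^ m
        ≤ (N:ℝ) * ∏ j : Fin m, (Nc n m d {j} : ℝ) := by
      have := (Nat.cast_le (α := ℝ)).2 h1
      push_cast at this
      exact this
    have h2 : ∏ j : Fin m, (Nc n m d {j} : ℝ) ≤ ((N:ℝ) - (c₀:ℝ)) ^ m := by
      calc ∏ j : Fin m, (Nc n m d {j} : ℝ) ≤ ∏ _j : Fin m, ((N:ℝ) - (c₀:ℝ)) := by
            apply Finset.prod_le_prod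
            · intro j _; positivity
            · intro j _
              have h3 : (Nc n m d {j} : ℝ) ≤ ((N - c₀ : ℕ) : ℝ) := by
                exact_mod_cast hNc_le j
              rwa [Nat.cast_sub hc₀N] at h3
        _ = ((N:ℝ) - (c₀:ℝ)) ^ m := by
            rw [Finset.prod_const, Finset.card_univ, Fintype.card_fin]
    calc _ ≤ (N:ℝ) * ∏ j : Fin m, (Nc n m d {j} : ℝ) := h1'
      _ ≤ _ := mul_le_mul_of_nonneg_left h2 (le_of_lt hNpos)
  have hP : (Nc n m d (univ : Finset (Fin m)) : ℝ)
      ≤ (N:ℝ) * (1 - (c₀:ℝ)/(N:ℝ)) ^ m := by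
    have e2 : (1 - (c₀:ℝ)/(N:ℝ)) ^ m = ((N:ℝ) - (c₀:ℝ)) ^ m / (N:ℝ) ^ m := by
      rw [show (1 - (c₀:ℝ)/(N:ℝ)) = ((N:ℝ) - (c₀:ℝ))/(N:ℝ) by field_simp, div_pow]
    rw [e2, ← mul_div_assoc, le_div_iff₀ (by positivity)]
    linarith [hmain]
  -- key numeric inequality : q ≤ c₀/N
  have hkey_nat : ((m-1) * α) ^ (d+1) ≤ n.choose (d+1) * (d+1) ^ (d+1) := by
    calc ((m-1) * α) ^ (d+1) ≤ n ^ (d+1) := by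
          apply Nat.pow_le_pow_left
          calc (m-1) * α ≤ m * α := Nat.mul_le_mul_right _ (Nat.sub_le m 1)
            _ = n := hnα.symm
      _ ≤ n.choose (d+1) * (d+1) ^ (d+1) := pow_le_choose_mul (d+1) n hd
  have hkey : ((m:ℝ) - 1) ^ (d+1) * (α:ℝ) ^ (d+1)
      ≤ (n.choose (d+1) : ℝ) * ((d:ℝ)+1) ^ (d+1) := by
    have hcast := (Nat.cast_le (α := ℝ)).2 hkey_nat
    push_cast [hm1cast] at hcast
    calc ((m:ℝ) - 1) ^ (d+1) * (α:ℝ) ^ (d+1) = (((m:ℝ) - 1) * α) ^ (d+1) := by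
          rw [mul_pow]
      _ ≤ _ := hcast
  have hm1pos : (0:ℝ) < (m:ℝ) - 1 := by
    have : (2:ℝ) ≤ (m:ℝ) := by exact_mod_cast hm
    linarith
  have hmpos : (0:ℝ) < (m:ℝ) := by linarith
  have hqQ : (1 - 1/(m:ℝ)) ^ n * ((α:ℝ)/((d:ℝ)+1)) ^ (d+1) ≤ (c₀:ℝ)/(N:ℝ) := by
    have hc₀cast : (c₀:ℝ) = (n.choose (d+1) : ℝ) * ((m:ℝ) - 1) ^ (n - (d+1)) := by
      rw [hc₀]; push_cast [hm1cast]; ring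
    have hNcast : (N:ℝ) = (m:ℝ)^n := by rw [hN]; push_cast; ring
    rw [hc₀cast, hNcast]
    have e1 : (1 - 1/(m:ℝ)) = ((m:ℝ)-1)/(m:ℝ) := by field_simp
    have hsplit : ((m:ℝ)-1)^n = ((m:ℝ)-1)^(d+1) * ((m:ℝ)-1)^(n-(d+1)) := by
      rw [← pow_add]; congr 1; omega
    calc (1 - 1/(m:ℝ))^n * ((α:ℝ)/((d:ℝ)+1))^(d+1)
        = (((m:ℝ)-1)^n * (α:ℝ)^(d+1)) / ((m:ℝ)^n * ((d:ℝ)+1)^(d+1)) := by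
          rw [e1, div_pow, div_pow, div_mul_div_comm]
      _ ≤ ((n.choose (d+1) : ℝ) * ((m:ℝ)-1)^(n-(d+1))) / (m:ℝ)^n := by
          rw [div_le_div_iff₀ (by positivity) (by positivity)]
          calc ((m:ℝ)-1)^n * (α:ℝ)^(d+1) * (m:ℝ)^n
              = (((m:ℝ)-1)^(d+1) * (α:ℝ)^(d+1)) * (((m:ℝ)-1)^(n-(d+1)) * (m:ℝ)^n) := by
                rw [hsplit]; ring
            _ ≤ ((n.choose (d+1) : ℝ) * ((d:ℝ)+1)^(d+1)) * (((m:ℝ)-1)^(n-(d+1)) * (m:ℝ)^n) :=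
                mul_le_mul_of_nonneg_right hkey (by positivity)
            _ = (n.choose (d+1) : ℝ) * ((m:ℝ)-1)^(n-(d+1)) * ((m:ℝ)^n * ((d:ℝ)+1)^(d+1)) := by
                ring
  -- exponential bound
  have hQ1 : (c₀:ℝ)/(N:ℝ) ≤ 1 := by
    rw [div_le_one hNpos]; exact_mod_cast hc₀N
  have hexp1 : (1 - (c₀:ℝ)/(N:ℝ)) ≤ Real.exp (-((c₀:ℝ)/(N:ℝ))) := by
    have := Real.add_one_le_exp (-((c₀:ℝ)/(N:ℝ)))
    linarith
  have hfinal : (1 - (c₀:ℝ)/(N:ℝ)) ^ m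
      ≤ Real.exp (-(m:ℝ) * (1 - 1/(m:ℝ)) ^ n * ((α:ℝ)/((d:ℝ)+1)) ^ (d+1)) := by
    calc (1 - (c₀:ℝ)/(N:ℝ)) ^ m ≤ Real.exp (-((c₀:ℝ)/(N:ℝ))) ^ m := by
          apply pow_le_pow_left₀ (by linarith) hexp1
      _ = Real.exp ((m:ℝ) * (-((c₀:ℝ)/(N:ℝ)))) := by rw [← Real.exp_nat_mul]
      _ ≤ Real.exp (-(m:ℝ) * (1 - 1/(m:ℝ)) ^ n * ((α:ℝ)/((d:ℝ)+1)) ^ (d+1)) := by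
          apply Real.exp_le_exp.2
          have h4 : (m:ℝ) * ((1 - 1/(m:ℝ)) ^ n * ((α:ℝ)/((d:ℝ)+1)) ^ (d+1))
              ≤ (m:ℝ) * ((c₀:ℝ)/(N:ℝ)) :=
            mul_le_mul_of_nonneg_left hqQ (le_of_lt hmpos)
          nlinarith [h4]
  have hNcast : (N:ℝ) = (m:ℝ)^n := by rw [hN]; push_cast; ring
  calc (Nc n m d (univ : Finset (Fin m)) : ℝ)
      ≤ (N:ℝ) * (1 - (c₀:ℝ)/(N:ℝ)) ^ m := hP
    _ ≤ (N:ℝ) * Real.exp (-(m:ℝ) * (1 - 1/(m:ℝ)) ^ n * ((α:ℝ)/((d:ℝ)+1)) ^ (d+1)) :=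
        mul_le_mul_of_nonneg_left hfinal (le_of_lt hNpos)
    _ = (m : ℝ) ^ n * Real.exp (-(m : ℝ) * (1 - 1 / m) ^ n * ((α : ℝ) / (d + 1)) ^ (d + 1)) := by
        rw [hNcast]

end NonExcess

theorem non_excess_probability_upper_bound (m α d : ℕ) (hm : 2 ≤ m) (hα : 1 ≤ α)
    (hαd : α ≤ d) (hd : d + 1 ≤ m * α) :
    ((Finset.univ.filter fun f : Fin (m * α) → Fin m =>
        ∀ k : Fin m, (Finset.univ.filter fun x => f x = k).card ≤ d).card : ℝ)
      ≤ (m : ℝ) ^ (m * α) *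
        Real.exp (-(m : ℝ) * (1 - 1 / m) ^ (m * α) * ((α : ℝ) / (d + 1)) ^ (d + 1)) :=
  NonExcess.helper (m * α) m α d hm hα hαd hd rfl
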